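/- For any Finsler manifold (M,F), neither the foliation V'TM (the G-orthogonal complement of the vertical Liouville field L inside the vertical distribution) nor the foliation V^⊥TM (the G-orthogonal complement of L in TTM) is totally geodesic with respect to the Levi-Civita connection of the Sasaki metric G on TM: for both foliations the second fundamental form satisfies H(∂̄/∂̄y^a, ∂̄/∂̄y^b) = −(1/F²) g_{ab} L, which cannot vanish since the matrix (g_{ab}) is positive definite. -/

import Mathlib

/-!
A local-coordinate framework for the geometry of the tangent bundle `TM` of an
`n`-dimensional Finsler manifold `(M, F)`, following the paper
"A frame on tangent bundle of a Finsler manifold and the natural foliations".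

All geometric objects are described through their components on a chart domain
`U` of `TM` (avoiding the zero section): a point `p : Pt n` is the pair of
coordinates `(x^i, y^i)`, and a vector field on `TM` is given by its
components in the natural frame `(∂/∂x^i, ∂/∂y^i)`.
-/

open scoped BigOperators

noncomputable section

namespace FinslerFoliations

/-- A point of the tangent bundle `TM` in local coordinates:
`p.1 = (x^i)` is the base point and `p.2 = (y^i)` is the fibre coordinate. -/
abbrev Pt (n : ℕ) : Type := (Fin n → ℝ) × (Fin n → ℝ)

/-- A (local) vector field on `TM`, given by its components in the natural
frame: `(X p).1 i` is the coefficient of `∂/∂x^i` and `(X p).2 i` the one of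
`∂/∂y^i`. -/
abbrev VF (n : ℕ) : Type := Pt n → Pt n

variable {n : ℕ}

/-- The coordinate vector `∂/∂x^i`. -/
def ex (i : Fin n) : Pt n := (Pi.single i 1, 0)

/-- The coordinate vector `∂/∂y^i`. -/
def ey (i : Fin n) : Pt n := (0, Pi.single i 1)

/-- Partial derivative of a scalar function in the constant direction `v`. -/
def pd (v : Pt n) (f : Pt n → ℝ) (p : Pt n) : ℝ := fderiv ℝ f p v

/-- Derivative of a scalar function along a vector field. -/
def Dv (X : VF n) (f : Pt n → ℝ) (p : Pt n) : ℝ := fderiv ℝ f p (X p)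

/-- The Lie bracket of two vector fields, in coordinates. -/
def lie (X Y : VF n) : VF n := fun p => fderiv ℝ Y p (X p) - fderiv ℝ X p (Y p)

/-- Local-coordinate data of an `n`-dimensional Finsler manifold `(M, F)` on a
chart domain `U ⊆ TM` avoiding the zero section: the fundamental function `F`
(smooth, positive and positively `1`-homogeneous in `y`), the fundamental
tensor `g_{ij} = ½ ∂²F²/∂y^i∂y^j` (symmetric and positive definite) with its
inverse `g^{ij}`, the spray coefficients
`G^i = (g^{ij}/4)(∂²F²/∂y^j∂x^k y^k − ∂F²/∂x^j)` and the nonlinear connection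
coefficients `G_i^j = ∂G^j/∂y^i`. -/
structure Chart (n : ℕ) : Type where
  /-- the chart domain in `TM` -/
  U : Set (Pt n)
  hUopen : IsOpen U
  hUslit : ∀ p ∈ U, p.2 ≠ 0
  /-- the fundamental function `F` -/
  F : Pt n → ℝ
  Fpos : ∀ p ∈ U, 0 < F p
  Fsmooth : ContDiffOn ℝ (⊤ : ℕ∞) F U
  Fhomog : ∀ p ∈ U, ∀ t : ℝ, 0 < t → (p.1, t • p.2) ∈ U →
    F (p.1, t • p.2) = t * F p
  /-- the fundamental tensor `g_{ij}` -/
  g : Fin n → Fin n → Pt n → ℝ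
  gdef : ∀ i j, ∀ p ∈ U,
    g i j p = (1/2) * pd (ey i) (pd (ey j) (fun q => F q ^ 2)) p
  gsmooth : ∀ i j, ContDiffOn ℝ (⊤ : ℕ∞) (g i j) U
  gsymm : ∀ i j, ∀ p ∈ U, g i j p = g j i p
  gposdef : ∀ p ∈ U, ∀ v : Fin n → ℝ, v ≠ 0 →
    0 < ∑ i, ∑ j, g i j p * v i * v j
  /-- the inverse `g^{ij}` of the fundamental tensor -/
  ginv : Fin n → Fin n → Pt n → ℝ
  hginv : ∀ i j, ∀ p ∈ U,
    (∑ k, g i k p * ginv k j p) = if i = j then (1:ℝ) else 0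
  /-- the spray coefficients `G^i` -/
  spray : Fin n → Pt n → ℝ
  spraydef : ∀ i, ∀ p ∈ U, spray i p = (1/4) * ∑ j, ginv i j p *
      ((∑ k, pd (ey j) (pd (ex k) (fun q => F q ^ 2)) p * p.2 k)
        - pd (ex j) (fun q => F q ^ 2) p)
  /-- the nonlinear connection coefficients `G_i^j` -/
  N : Fin n → Fin n → Pt n → ℝ
  Ndef : ∀ i j, ∀ p ∈ U, N i j p = pd (ey i) (spray j) p
  Nsmooth : ∀ i j, ContDiffOn ℝ (⊤ : ℕ∞) (N i j) U

variable (fc : Chart n)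

/-- the vertical frame field `∂/∂y^i`. -/
def dyv (i : Fin n) : VF n := fun _ => ey i

/-- the horizontal frame field `δ/δx^i = ∂/∂x^i − G_i^j ∂/∂y^j`. -/
def ddx (i : Fin n) : VF n := fun p => (Pi.single i 1, fun j => -(fc.N i j p))

/-- the vertical Liouville vector field `L = y^i ∂/∂y^i`. -/
def LV : VF n := fun p => ((0 : Fin n → ℝ), p.2)

/-- the horizontal Liouville vector field `ξ = y^i δ/δx^i`. -/
def XI : VF n := fun p => (p.2, fun j => -(∑ i, p.2 i * fc.N i j p))

/-- the dual coframe `δy^i = dy^i + G_j^i dx^j`, applied to a tangent vector. -/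
def dely (i : Fin n) (p : Pt n) (v : Pt n) : ℝ := v.2 i + ∑ j, fc.N j i p * v.1 j

/-- the Sasaki lifted metric `G = g_{ij} dx^i ⊗ dx^j + g_{ij} δy^i ⊗ δy^j`. -/
def Gs (p : Pt n) (v w : Pt n) : ℝ :=
  ∑ i, ∑ j, fc.g i j p * (v.1 i * w.1 j + dely fc i p v * dely fc j p w)

/-- the natural almost complex structure
`J = δ/δx^i ⊗ δy^i − ∂/∂y^i ⊗ dx^i`, as a pointwise endomorphism. -/
def Jm (p : Pt n) (v : Pt n) : Pt n :=
  (fun i => dely fc i p v,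
   fun k => -(∑ i, dely fc i p v * fc.N i k p) - v.1 k)

/-- `J` applied to a vector field. -/
def Jvf (X : VF n) : VF n := fun p => Jm fc p (X p)

/-- the curvature coefficients `R^k_{ij} = δG_i^k/δx^j − δG_j^k/δx^i` of the
nonlinear connection. -/
def Rc (i j k : Fin n) (p : Pt n) : ℝ :=
  Dv (ddx fc j) (fc.N i k) p - Dv (ddx fc i) (fc.N j k) p

/-- the Cartan tensor `g_{ijk} = ½ ∂g_{ij}/∂y^k`. -/
def Cartan (i j k : Fin n) (p : Pt n) : ℝ := (1/2) * pd (ey k) (fc.g i j) p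

/-- the vertical adapted frame field `∂̄/∂̄y^a = E_a^i ∂/∂y^i`. -/
def vb (E : Fin (n-1) → Fin n → Pt n → ℝ) (a : Fin (n-1)) : VF n :=
  fun p => ((0 : Fin n → ℝ), fun i => E a i p)

/-- the horizontal adapted frame field `δ̄/δ̄x^a = J(∂̄/∂̄y^a)`. -/
def hb (E : Fin (n-1) → Fin n → Pt n → ℝ) (a : Fin (n-1)) : VF n :=
  fun p => Jm fc p (vb E a p)

/-- `E` is the coefficient matrix of an adapted local frame
`∂̄/∂̄y^a = E_a^i ∂/∂y^i`, `a = 1, …, n−1`, of the distribution `V'TM` (the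
`G`-orthogonal complement of the vertical Liouville field `L` inside the
vertical distribution `VTM`): the coefficients are smooth, pointwise linearly
independent, and each `∂̄/∂̄y^a` is `G`-orthogonal to `L`. -/
def IsAdaptedFrame (E : Fin (n-1) → Fin n → Pt n → ℝ) : Prop :=
  (∀ a i, ContDiffOn ℝ (⊤ : ℕ∞) (E a i) fc.U) ∧
  (∀ p ∈ fc.U, LinearIndependent ℝ (fun a : Fin (n-1) => (fun i => E a i p))) ∧
  (∀ a, ∀ p ∈ fc.U, Gs fc p (vb E a p) (LV p) = 0)

/-- `g_{ab} = g_{ij} E_a^i E_b^j`, the components of the Sasaki metric in the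
adapted frame. -/
def gb (E : Fin (n-1) → Fin n → Pt n → ℝ) (p : Pt n) (a b : Fin (n-1)) : ℝ :=
  ∑ i, ∑ j, fc.g i j p * E a i p * E b j p

/-- the matrix `(g_{ab})`. -/
def gbMat (E : Fin (n-1) → Fin n → Pt n → ℝ) (p : Pt n) :
    Matrix (Fin (n-1)) (Fin (n-1)) ℝ :=
  Matrix.of fun a b => gb fc E p a b

/-- `(g^{ab})`, the inverse of the matrix `(g_{ab})`. -/
def gbInv (E : Fin (n-1) → Fin n → Pt n → ℝ) (p : Pt n) (a b : Fin (n-1)) : ℝ :=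
  (gbMat fc E p)⁻¹ a b

/-- `g_{abc} = ½ E_a^i E_b^j E_c^k g_{ijk}`, the Cartan tensor in the adapted
frame. -/
def CartanBar (E : Fin (n-1) → Fin n → Pt n → ℝ) (a b c : Fin (n-1))
    (p : Pt n) : ℝ :=
  (1/2) * ∑ i, ∑ j, ∑ k, E a i p * E b j p * E c k p * Cartan fc i j k p

/-- `R_{cab} = E_c^i E_a^j E_b^k R^h_{jk} g_{hi}`, the lowered curvature of the
nonlinear connection in the adapted frame. -/
def Rlow (E : Fin (n-1) → Fin n → Pt n → ℝ) (c a b : Fin (n-1)) (p : Pt n) : ℝ :=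
  ∑ i, ∑ j, ∑ k, ∑ h, E c i p * E a j p * E b k p * Rc fc j k h p * fc.g h i p

/-- `nab` is the Levi-Civita connection of the Sasaki metric `G` on the chart
domain, characterized by the Koszul formula
`2G(∇_X Y, Z) = X G(Y,Z) + Y G(X,Z) − Z G(X,Y)
  − G([X,Z],Y) − G([Y,Z],X) + G([X,Y],Z)`. -/
def IsLeviCivita (nab : VF n → VF n → VF n) : Prop :=
  ∀ X Y Z : VF n,
    ContDiffOn ℝ (⊤ : ℕ∞) X fc.U → ContDiffOn ℝ (⊤ : ℕ∞) Y fc.U →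
    ContDiffOn ℝ (⊤ : ℕ∞) Z fc.U → ∀ p ∈ fc.U,
    2 * Gs fc p (nab X Y p) (Z p) =
      Dv X (fun q => Gs fc q (Y q) (Z q)) p
      + Dv Y (fun q => Gs fc q (X q) (Z q)) p
      - Dv Z (fun q => Gs fc q (X q) (Y q)) p
      - Gs fc p (lie X Z p) (Y p)
      - Gs fc p (lie Y Z p) (X p)
      + Gs fc p (lie X Y p) (Z p)

/-- the `G`-orthogonal projection of a vector field onto the line spanned by
the vertical Liouville field `L` (the normal direction to the indicatrix). -/
def projL (X : VF n) : VF n :=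
  fun p => (Gs fc p (X p) (LV p) / Gs fc p (LV p) (LV p)) • LV p

/-- the curvature tensor `R(X,Y)Z = ∇_X ∇_Y Z − ∇_Y ∇_X Z − ∇_{[X,Y]} Z` of a
connection. -/
def curv (nab : VF n → VF n → VF n) (X Y Z : VF n) : VF n :=
  fun p => nab X (nab Y Z) p - nab Y (nab X Z) p - nab (lie X Y) Z p

/-- membership in `V'TM`: vertical and `G`-orthogonal to `L`. -/
def InV' (p v : Pt n) : Prop := v.1 = 0 ∧ Gs fc p v (LV p) = 0

/-- membership in `V^⊥TM`: `G`-orthogonal to `L`. -/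
def InVperp (p v : Pt n) : Prop := Gs fc p v (LV p) = 0

/-- membership in `HTM ⊕ ⟨L⟩`, the `G`-orthogonal complement of `V'TM`. -/
def InHL (p v : Pt n) : Prop := ∃ c : ℝ, ∀ i, dely fc i p v = c * p.2 i

/-- membership in the line spanned by the vertical Liouville field `L`. -/
def InL (p v : Pt n) : Prop := ∃ c : ℝ, v = c • LV p

/-- membership in the plane spanned by `L` and `ξ`. -/
def InLXi (p v : Pt n) : Prop := ∃ c d : ℝ, v = c • LV p + d • XI fc p

/-- membership in the `G`-orthogonal complement of `⟨L, ξ⟩`. -/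
def InLXiPerp (p v : Pt n) : Prop :=
  Gs fc p v (LV p) = 0 ∧ Gs fc p v (XI fc p) = 0

/-- the contact `1`-form `η = y^i g_{ij} dx^j` of the indicatrix bundle,
applied to a tangent vector. -/
def etaC (p : Pt n) (v : Pt n) : ℝ := ∑ i, ∑ j, p.2 i * fc.g i j p * v.1 j

/-- the `(1,1)`-tensor `φ` of the contact structure of the indicatrix bundle:
`φ = J` on the contact distribution `D` and `φ(ξ) = 0`; on tangent vectors of
`IM` it is given by `φ(v) = J v + η(v) L`. -/
def phiC (p : Pt n) (v : Pt n) : Pt n := Jm fc p v + etaC fc p v • LV p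

/-- `φ` applied to a vector field. -/
def phiVF (X : VF n) : VF n := fun p => phiC fc p (X p)

/-- `η` applied to a vector field, as a scalar function. -/
def etaVF (X : VF n) : Pt n → ℝ := fun p => etaC fc p (X p)

/-- the exterior derivative `dη(X,Y) = X(η(Y)) − Y(η(X)) − η([X,Y])`. -/
def dEta (X Y : VF n) (p : Pt n) : ℝ :=
  Dv X (etaVF fc Y) p - Dv Y (etaVF fc X) p - etaC fc p (lie X Y p)

/-- the normality tensor `N^{(1)} = [φ,φ] + 2 dη ⊗ ξ` of the contact structure
of the indicatrix bundle, evaluated on vector fields, where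
`[φ,φ](X,Y) = φ²[X,Y] + [φX,φY] − φ[φX,Y] − φ[X,φY]` is the Nijenhuis torsion
of `φ`. -/
def Ntensor (X Y : VF n) : VF n := fun p =>
  phiC fc p (phiC fc p (lie X Y p)) + lie (phiVF fc X) (phiVF fc Y) p
    - phiC fc p (lie (phiVF fc X) Y p) - phiC fc p (lie X (phiVF fc Y) p)
    + (2 * dEta fc X Y p) • XI fc p

/-- a vector field of `TM` is tangent to the indicatrix bundle
`IM = {F = 1}` (equivalently, `G`-orthogonal to the normal field `L` along
`IM`). -/
def TangentIM (X : VF n) : Prop :=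
  ∀ p ∈ fc.U, fc.F p = 1 → Gs fc p (X p) (LV p) = 0

/-- The indicatrix bundle `IM`, with its natural contact metric structure
`(φ, η, ξ, Ḡ)`, is a Sasakian manifold: the contact structure is normal, i.e.
the tensor `N^{(1)} = [φ,φ] + 2 dη ⊗ ξ` vanishes on vector fields tangent to
`IM`. -/
def IsSasakianIM : Prop :=
  ∀ X Y : VF n, ContDiffOn ℝ (⊤ : ℕ∞) X fc.U → ContDiffOn ℝ (⊤ : ℕ∞) Y fc.U →
    TangentIM fc X → TangentIM fc Y →
    ∀ p ∈ fc.U, fc.F p = 1 → Ntensor fc X Y p = 0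

/-- the Nijenhuis tensor of the natural almost complex structure `J`:
`N_J(X,Y) = [JX,JY] − J[JX,Y] − J[X,JY] + J²[X,Y]`, with `J² = −Id`. -/
def NijJ (X Y : VF n) : VF n := fun p =>
  lie (Jvf fc X) (Jvf fc Y) p - Jm fc p (lie (Jvf fc X) Y p)
    - Jm fc p (lie X (Jvf fc Y) p) - lie X Y p

/-- the almost complex structure `J̄` on `TM ≅ IM × ℝ` induced by the contact
structure `(φ, η, ξ)` of the indicatrix bundle via
`J̄(X + f L) = φ(X) − f ξ + η(X) L`, where `X` is tangent to `IM`;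
a tangent vector `v` is decomposed as `v = vᵀ + f L` with
`f = G(v,L)/G(L,L)` and `vᵀ` tangent to the indicatrix. -/
def Jbar (p : Pt n) (v : Pt n) : Pt n :=
  phiC fc p (v - (Gs fc p v (LV p) / Gs fc p (LV p) (LV p)) • LV p)
    - (Gs fc p v (LV p) / Gs fc p (LV p) (LV p)) • XI fc p
    + etaC fc p (v - (Gs fc p v (LV p) / Gs fc p (LV p) (LV p)) • LV p) • LV p


open Filter
variable {n : ℕ}

lemma top_le2 : (2 : WithTop ℕ∞) ≤ ((⊤:ℕ∞) : WithTop ℕ∞) := by decide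
lemma top_add1 : ((⊤:ℕ∞) : WithTop ℕ∞) + 1 ≤ ((⊤:ℕ∞) : WithTop ℕ∞) := by decide
lemma top_le1 : (1 : WithTop ℕ∞) ≤ ((⊤:ℕ∞) : WithTop ℕ∞) := by decide

lemma fderiv_apply_mul {f g : Pt n → ℝ} {p : Pt n} (hf : DifferentiableAt ℝ f p)
    (hg : DifferentiableAt ℝ g p) (w : Pt n) :
    fderiv ℝ (fun q => f q * g q) p w = fderiv ℝ f p w * g p + f p * fderiv ℝ g p w := by
  rw [fderiv_fun_mul hf hg]; simp; ring

def sndj (j : Fin n) : Pt n →L[ℝ] ℝ :=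
  (ContinuousLinearMap.proj (R := ℝ) (φ := fun _ : Fin n => ℝ) j).comp
    (ContinuousLinearMap.snd ℝ (Fin n → ℝ) (Fin n → ℝ))

lemma fderiv_snd_apply (j : Fin n) (p w : Pt n) :
    fderiv ℝ (fun q : Pt n => q.2 j) p w = w.2 j := by
  have h : HasFDerivAt (fun q : Pt n => q.2 j) (sndj j) p := (sndj j).hasFDerivAt
  rw [h.fderiv]; rfl

lemma diffAt_snd_apply (j : Fin n) (p : Pt n) :
    DifferentiableAt ℝ (fun q : Pt n => q.2 j) p := by
  have h : HasFDerivAt (fun q : Pt n => q.2 j) (sndj j) p := (sndj j).hasFDerivAt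
  exact h.differentiableAt

lemma fderiv_zero_of_eq_zero {U : Set (Pt n)} (hU : IsOpen U) {f : Pt n → ℝ}
    (h : ∀ q ∈ U, f q = 0) {p : Pt n} (hp : p ∈ U) : fderiv ℝ f p = 0 := by
  have he : f =ᶠ[nhds p] (fun _ => (0:ℝ)) :=
    Filter.eventually_of_mem (hU.mem_nhds hp) h
  rw [he.fderiv_eq, fderiv_fun_const]; rfl

lemma fderiv_vert (f : Pt n → ℝ) (p : Pt n) (u : Fin n → ℝ) :
    fderiv ℝ f p (((0:Fin n → ℝ), u) : Pt n)
      = ∑ k, u k * fderiv ℝ f p (((0:Fin n → ℝ), Pi.single k 1) : Pt n) := by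
  have hu : (((0:Fin n → ℝ), u) : Pt n) = ∑ k, u k • (((0:Fin n → ℝ), Pi.single k 1) : Pt n) := by
    ext i
    · simp [Prod.fst_sum]
    · simp [Prod.snd_sum, Finset.sum_apply, Pi.single_apply]
  rw [hu, map_sum]
  refine Finset.sum_congr rfl fun k _ => ?_
  rw [map_smul]; rfl

lemma contDiffAt_of_on {U : Set (Pt n)} (hU : IsOpen U) {f : Pt n → ℝ}
    (hf : ContDiffOn ℝ (⊤:ℕ∞) f U) {p : Pt n} (hp : p ∈ U) :
    ContDiffAt ℝ ((⊤:ℕ∞) : WithTop ℕ∞) f p :=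
  hf.contDiffAt (hU.mem_nhds hp)

lemma diffAt_of_on {U : Set (Pt n)} (hU : IsOpen U) {f : Pt n → ℝ}
    (hf : ContDiffOn ℝ (⊤:ℕ∞) f U) {p : Pt n} (hp : p ∈ U) :
    DifferentiableAt ℝ f p :=
  (contDiffAt_of_on hU hf hp).differentiableAt (by decide)

lemma contDiffOn_fderiv_apply {U : Set (Pt n)} (hU : IsOpen U) {f : Pt n → ℝ}
    (hf : ContDiffOn ℝ (⊤:ℕ∞) f U) (v : Pt n) :
    ContDiffOn ℝ (⊤:ℕ∞) (fun q => fderiv ℝ f q v) U := by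
  intro p hp
  have h1 : ContDiffAt ℝ ((⊤:ℕ∞) : WithTop ℕ∞) (fderiv ℝ f) p :=
    (contDiffAt_of_on hU hf hp).fderiv_right top_add1
  exact (h1.clm_apply contDiffAt_const).contDiffWithinAt

lemma pd_symm {U : Set (Pt n)} (hU : IsOpen U) {f : Pt n → ℝ}
    (hf : ContDiffOn ℝ (⊤:ℕ∞) f U) {p : Pt n} (hp : p ∈ U) (v w : Pt n) :
    fderiv ℝ (fun q => fderiv ℝ f q v) p w = fderiv ℝ (fun q => fderiv ℝ f q w) p v := by
  have hc : ContDiffAt ℝ ((⊤:ℕ∞) : WithTop ℕ∞) f p := contDiffAt_of_on hU hf hp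
  have hsymm := hc.isSymmSndFDerivAt (by simpa [minSmoothness_of_isRCLikeNormedField] using top_le2)
  have hd : DifferentiableAt ℝ (fderiv ℝ f) p :=
    (hc.fderiv_right top_add1).differentiableAt (by decide)
  have key : ∀ u : Pt n, fderiv ℝ (fun q => fderiv ℝ f q u) p
      = ((fderiv ℝ (fderiv ℝ f) p).flip u) := by
    intro u
    rw [fderiv_clm_apply hd (differentiableAt_const u)]
    simp
  rw [key v, key w]
  exact hsymm w v

def HomOn (U : Set (Pt n)) (m : ℕ) (f : Pt n → ℝ) : Prop :=
  ∀ p ∈ U, ∀ t : ℝ, 0 < t → (p.1, t • p.2) ∈ U → f (p.1, t • p.2) = t ^ m * f p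

lemma HomOn.euler {U : Set (Pt n)} (hU : IsOpen U) {m : ℕ} {f : Pt n → ℝ}
    (hf : HomOn U m f) {p : Pt n} (hp : p ∈ U) (hd : DifferentiableAt ℝ f p) :
    fderiv ℝ f p (((0:Fin n → ℝ), p.2) : Pt n) = m * f p := by
  set γ : ℝ → Pt n := fun t => (p.1, t • p.2) with hγdef
  have hγ : HasDerivAt γ (((0:Fin n → ℝ), p.2) : Pt n) 1 := by
    apply HasDerivAt.prodMk
    · simpa using (hasDerivAt_const (1:ℝ) p.1)
    · simpa using (hasDerivAt_id (1:ℝ)).smul_const p.2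
  have hγ1 : γ 1 = p := by simp [hγdef]
  have hcomp : HasDerivAt (f ∘ γ) (fderiv ℝ f p (((0:Fin n → ℝ), p.2) : Pt n)) 1 := by
    refine HasFDerivAt.comp_hasDerivAt 1 ?_ hγ
    rw [hγ1]; exact hd.hasFDerivAt
  have hev : (f ∘ γ) =ᶠ[nhds 1] fun t => t ^ m * f p := by
    have hcont : Continuous γ := by
      apply Continuous.prodMk continuous_const
      exact continuous_id.smul continuous_const
    have h1 : ∀ᶠ t in nhds (1:ℝ), γ t ∈ U := hcont.continuousAt.eventually_mem
      (hU.mem_nhds (by rw [hγ1]; exact hp))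
    have h2 : ∀ᶠ t in nhds (1:ℝ), (0:ℝ) < t := eventually_gt_nhds one_pos
    filter_upwards [h1, h2] with t ht hpos
    exact hf p hp t hpos ht
  have h2 : HasDerivAt (fun t : ℝ => t ^ m * f p) ((m:ℝ) * f p) 1 := by
    simpa using (hasDerivAt_pow m (1:ℝ)).mul_const (f p)
  have h3 : HasDerivAt (f ∘ γ) ((m:ℝ) * f p) 1 := h2.congr_of_eventuallyEq hev
  exact hcomp.unique h3

def scaleMap (t : ℝ) : Pt n →L[ℝ] Pt n :=
  (ContinuousLinearMap.fst ℝ (Fin n → ℝ) (Fin n → ℝ)).prod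
    (t • ContinuousLinearMap.snd ℝ (Fin n → ℝ) (Fin n → ℝ))

lemma scaleMap_apply (t : ℝ) (q : Pt n) : scaleMap t q = (q.1, t • q.2) := rfl

lemma HomOn.fderiv_vert_hom {U : Set (Pt n)} (hU : IsOpen U) {m : ℕ} {f : Pt n → ℝ}
    (hf : HomOn U m f) (hdiff : ∀ q ∈ U, DifferentiableAt ℝ f q) (hm : 1 ≤ m)
    (u : Fin n → ℝ) :
    HomOn U (m - 1) (fun q => fderiv ℝ f q (((0:Fin n → ℝ), u) : Pt n)) := by
  intro p hp t ht hq
  have hσ : ∀ q : Pt n, ((q.1, t • q.2) : Pt n) = scaleMap t q := fun q => rfl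
  have hev : (fun q => f (scaleMap t q)) =ᶠ[nhds p] fun q => t ^ m * f q := by
    have h1 : ∀ᶠ q in nhds p, (scaleMap t q : Pt n) ∈ U :=
      ((scaleMap t).continuous.continuousAt).eventually_mem
        (hU.mem_nhds (by rw [← hσ p]; exact hq))
    have h2 : ∀ᶠ q in nhds p, q ∈ U := hU.eventually_mem hp
    filter_upwards [h1, h2] with q h1q h2q
    rw [← hσ q]; exact hf q h2q t ht (by rw [hσ q]; exact h1q)
  have hL : fderiv ℝ (fun q => f (scaleMap t q)) p
      = (fderiv ℝ f (scaleMap t p)).comp (scaleMap t) := by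
    have := fderiv_comp (x := p) (hdiff _ (by rw [← hσ p]; exact hq)) (scaleMap t).differentiableAt
    rw [show (fun q => f (scaleMap t q)) = f ∘ (scaleMap t) from rfl, this,
      (scaleMap t).fderiv]
  have hR : fderiv ℝ (fun q => (t ^ m : ℝ) * f q) p = (t ^ m : ℝ) • fderiv ℝ f p :=
    fderiv_const_mul (hdiff p hp) ((t ^ m : ℝ))
  have heq := hev.fderiv_eq (𝕜 := ℝ)
  rw [hL, hR] at heq
  have happ := congrArg (fun (L : Pt n →L[ℝ] ℝ) => L (((0:Fin n → ℝ), u) : Pt n)) heq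
  simp only [ContinuousLinearMap.coe_comp', Function.comp_apply,
    ContinuousLinearMap.smul_apply] at happ
  have hscale : (scaleMap t (((0:Fin n → ℝ), u) : Pt n) : Pt n)
      = t • (((0:Fin n → ℝ), u) : Pt n) := by
    rw [scaleMap_apply]; ext i <;> simp
  rw [hscale, map_smul] at happ
  have ht' : (t:ℝ) ≠ 0 := ne_of_gt ht
  have hm' : t ^ m = t * t ^ (m - 1) := by
    conv_lhs => rw [show m = (m - 1) + 1 from (Nat.sub_add_cancel hm).symm]
    rw [pow_succ]; ring
  rw [hσ p] at *
  have : t * fderiv ℝ f (scaleMap t p) (((0:Fin n → ℝ), u) : Pt n)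
      = t * (t ^ (m-1) * fderiv ℝ f p (((0:Fin n → ℝ), u) : Pt n)) := by
    rw [smul_eq_mul, smul_eq_mul] at happ
    rw [happ, hm']; ring
  have := mul_left_cancel₀ ht' this
  simpa [← hσ p] using this

lemma ey_def (k : Fin n) : (ey k : Pt n) = (((0:Fin n → ℝ), Pi.single k 1) : Pt n) := rfl

lemma fderiv_vert' (f : Pt n → ℝ) (p : Pt n) (u : Fin n → ℝ) :
    fderiv ℝ f p (((0:Fin n → ℝ), u) : Pt n) = ∑ k, u k * fderiv ℝ f p (ey k) := by
  simpa [ey_def] using fderiv_vert f p u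

variable (fc : Chart n)

def F2 (fc : Chart n) : Pt n → ℝ := fun q => fc.F q ^ 2
def phi (fc : Chart n) (j : Fin n) : Pt n → ℝ := fun q => fderiv ℝ (F2 fc) q (ey j)
def chi (fc : Chart n) (i j : Fin n) : Pt n → ℝ := fun q => fderiv ℝ (phi fc j) q (ey i)

lemma F2smooth : ContDiffOn ℝ (⊤:ℕ∞) (F2 fc) fc.U := fc.Fsmooth.pow 2

lemma phismooth (j : Fin n) : ContDiffOn ℝ (⊤:ℕ∞) (phi fc j) fc.U :=
  contDiffOn_fderiv_apply fc.hUopen (F2smooth fc) (ey j)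

lemma chismooth (i j : Fin n) : ContDiffOn ℝ (⊤:ℕ∞) (chi fc i j) fc.U :=
  contDiffOn_fderiv_apply fc.hUopen (phismooth fc j) (ey i)

lemma F2hom : HomOn fc.U 2 (F2 fc) := by
  intro p hp t ht hq
  simp only [F2]
  rw [fc.Fhomog p hp t ht hq]; ring

lemma phihom (j : Fin n) : HomOn fc.U 1 (phi fc j) := by
  have h := (F2hom fc).fderiv_vert_hom fc.hUopen
    (fun q hq => diffAt_of_on fc.hUopen (F2smooth fc) hq) (by norm_num) (Pi.single j 1)
  intro p hp t ht hq
  have := h p hp t ht hq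
  simpa [phi, ey_def] using this

lemma chihom (i j : Fin n) : HomOn fc.U 0 (chi fc i j) := by
  have h := (phihom fc j).fderiv_vert_hom fc.hUopen
    (fun q hq => diffAt_of_on fc.hUopen (phismooth fc j) hq) le_rfl (Pi.single i 1)
  intro p hp t ht hq
  have := h p hp t ht hq
  simpa [chi, ey_def] using this

lemma g_ev (i j : Fin n) {p : Pt n} (hp : p ∈ fc.U) :
    fc.g i j =ᶠ[nhds p] fun q => (1/2) * chi fc i j q :=
  Filter.eventually_of_mem (fc.hUopen.mem_nhds hp) (fun q hq => by
    rw [fc.gdef i j q hq]; rfl)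

lemma g_val (i j : Fin n) {p : Pt n} (hp : p ∈ fc.U) :
    fc.g i j p = 1/2 * fderiv ℝ (phi fc j) p (ey i) := by
  rw [fc.gdef i j p hp]; rfl

lemma euler_phi (j : Fin n) {p : Pt n} (hp : p ∈ fc.U) :
    fderiv ℝ (phi fc j) p (((0:Fin n → ℝ), p.2) : Pt n) = phi fc j p := by
  have := (phihom fc j).euler fc.hUopen hp (diffAt_of_on fc.hUopen (phismooth fc j) hp)
  simpa using this

lemma euler_F2 {p : Pt n} (hp : p ∈ fc.U) :
    fderiv ℝ (F2 fc) p (((0:Fin n → ℝ), p.2) : Pt n) = 2 * F2 fc p := by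
  have := (F2hom fc).euler fc.hUopen hp (diffAt_of_on fc.hUopen (F2smooth fc) hp)
  simpa using this

lemma fderiv_g_L (i j : Fin n) {p : Pt n} (hp : p ∈ fc.U) :
    fderiv ℝ (fc.g i j) p (((0:Fin n → ℝ), p.2) : Pt n) = 0 := by
  rw [(g_ev fc i j hp).fderiv_eq (𝕜 := ℝ),
    fderiv_const_mul (diffAt_of_on fc.hUopen (chismooth fc i j) hp) (1/2 : ℝ)]
  have := (chihom fc i j).euler fc.hUopen hp (diffAt_of_on fc.hUopen (chismooth fc i j) hp)
  simp only [Nat.cast_zero, zero_mul] at this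
  simp [this]

lemma cartan_symm (i j k : Fin n) {p : Pt n} (hp : p ∈ fc.U) :
    fderiv ℝ (fc.g i j) p (ey k) = fderiv ℝ (fc.g i k) p (ey j) := by
  rw [(g_ev fc i j hp).fderiv_eq (𝕜 := ℝ), (g_ev fc i k hp).fderiv_eq (𝕜 := ℝ),
    fderiv_const_mul (diffAt_of_on fc.hUopen (chismooth fc i j) hp) (1/2 : ℝ),
    fderiv_const_mul (diffAt_of_on fc.hUopen (chismooth fc i k) hp) (1/2 : ℝ)]
  simp only [ContinuousLinearMap.smul_apply, smul_eq_mul]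
  congr 1
  have hev : (fun q => fderiv ℝ (phi fc j) q (ey k))
      =ᶠ[nhds p] (fun q => fderiv ℝ (phi fc k) q (ey j)) :=
    Filter.eventually_of_mem (fc.hUopen.mem_nhds hp) (fun q hq =>
      pd_symm fc.hUopen (F2smooth fc) hq (ey j) (ey k))
  calc fderiv ℝ (chi fc i j) p (ey k)
      = fderiv ℝ (fun q => fderiv ℝ (phi fc j) q (ey k)) p (ey i) :=
        pd_symm fc.hUopen (phismooth fc j) hp (ey i) (ey k)
    _ = fderiv ℝ (fun q => fderiv ℝ (phi fc k) q (ey j)) p (ey i) := by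
        rw [hev.fderiv_eq (𝕜 := ℝ)]
    _ = fderiv ℝ (chi fc i k) p (ey j) :=
        pd_symm fc.hUopen (phismooth fc k) hp (ey j) (ey i)

lemma g_contract (i : Fin n) (u : Fin n → ℝ) {p : Pt n} (hp : p ∈ fc.U) :
    ∑ j, fderiv ℝ (fc.g i j) p (((0:Fin n → ℝ), u) : Pt n) * p.2 j = 0 := by
  calc ∑ j, fderiv ℝ (fc.g i j) p (((0:Fin n → ℝ), u) : Pt n) * p.2 j
      = ∑ j, ∑ k, u k * fderiv ℝ (fc.g i j) p (ey k) * p.2 j := by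
        refine Finset.sum_congr rfl fun j _ => ?_
        rw [fderiv_vert' (fc.g i j) p u, Finset.sum_mul]
    _ = ∑ k, u k * ∑ j, fderiv ℝ (fc.g i k) p (ey j) * p.2 j := by
        rw [Finset.sum_comm]
        refine Finset.sum_congr rfl fun k _ => ?_
        rw [Finset.mul_sum]
        refine Finset.sum_congr rfl fun j _ => ?_
        rw [cartan_symm fc i j k hp]; ring
    _ = 0 := by
        refine Finset.sum_eq_zero fun k _ => ?_
        have : ∑ j, p.2 j * fderiv ℝ (fc.g i k) p (ey j)
            = fderiv ℝ (fc.g i k) p (((0:Fin n → ℝ), p.2) : Pt n) :=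
          (fderiv_vert' (fc.g i k) p p.2).symm
        have h2 : ∑ j, fderiv ℝ (fc.g i k) p (ey j) * p.2 j = 0 := by
          rw [show (∑ j, fderiv ℝ (fc.g i k) p (ey j) * p.2 j)
              = ∑ j, p.2 j * fderiv ℝ (fc.g i k) p (ey j) from
            Finset.sum_congr rfl fun j _ => mul_comm _ _, this, fderiv_g_L fc i k hp]
        rw [h2, mul_zero]

lemma GLL {p : Pt n} (hp : p ∈ fc.U) :
    ∑ i, ∑ j, fc.g i j p * (p.2 i * p.2 j) = fc.F p ^ 2 := by
  calc ∑ i, ∑ j, fc.g i j p * (p.2 i * p.2 j)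
      = ∑ j, ∑ i, fc.g i j p * (p.2 i * p.2 j) := Finset.sum_comm
    _ = ∑ j, p.2 j * (1/2) * ∑ i, p.2 i * fderiv ℝ (phi fc j) p (ey i) := by
        refine Finset.sum_congr rfl fun j _ => ?_
        rw [Finset.mul_sum]
        refine Finset.sum_congr rfl fun i _ => ?_
        rw [g_val fc i j hp]; ring
    _ = ∑ j, p.2 j * (1/2) * phi fc j p := by
        refine Finset.sum_congr rfl fun j _ => ?_
        rw [← fderiv_vert' (phi fc j) p p.2, euler_phi fc j hp]
    _ = (1/2) * ∑ j, p.2 j * fderiv ℝ (F2 fc) p (ey j) := by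
        rw [Finset.mul_sum]
        refine Finset.sum_congr rfl fun j _ => ?_
        rw [show phi fc j p = fderiv ℝ (F2 fc) p (ey j) from rfl]; ring
    _ = fc.F p ^ 2 := by
        rw [← fderiv_vert' (F2 fc) p p.2, euler_F2 fc hp]
        simp [F2]


/-! ### The Koszul computation -/

lemma Gs_vv (p : Pt n) (u w : Fin n → ℝ) :
    Gs fc p (((0:Fin n → ℝ), u) : Pt n) (((0:Fin n → ℝ), w) : Pt n)
      = ∑ i, ∑ j, fc.g i j p * (u i * w j) := by
  simp [Gs, dely]

lemma vb_smooth {E : Fin (n-1) → Fin n → Pt n → ℝ}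
    (hE1 : ∀ a i, ContDiffOn ℝ (⊤:ℕ∞) (E a i) fc.U) (a : Fin (n-1)) :
    ContDiffOn ℝ (⊤:ℕ∞) (vb E a) fc.U :=
  ContDiffOn.prodMk contDiffOn_const (contDiffOn_pi.2 fun i => hE1 a i)

lemma LV_smooth : ContDiffOn ℝ (⊤:ℕ∞) (LV : VF n) fc.U :=
  ContDiffOn.prodMk contDiffOn_const (contDiff_snd.contDiffOn)

lemma fderiv_vf_apply {A : Fin n → Pt n → ℝ} {p : Pt n}
    (hA : ∀ i, DifferentiableAt ℝ (A i) p) (w : Pt n) :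
    fderiv ℝ (fun q => (((0:Fin n → ℝ), fun i => A i q) : Pt n)) p w
      = (((0:Fin n → ℝ), fun i => fderiv ℝ (A i) p w) : Pt n) := by
  have h : HasFDerivAt (fun q => (((0:Fin n → ℝ), fun i => A i q) : Pt n))
      ((0 : Pt n →L[ℝ] (Fin n → ℝ)).prod
        (ContinuousLinearMap.pi fun i => fderiv ℝ (A i) p)) p := by
    apply HasFDerivAt.prodMk
    · exact hasFDerivAt_const (0:Fin n → ℝ) p
    · exact hasFDerivAt_pi.2 fun i => (hA i).hasFDerivAt
  rw [h.fderiv]; rfl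

lemma fderiv_LV_apply (p w : Pt n) :
    fderiv ℝ (LV : VF n) p w = (((0:Fin n → ℝ), w.2) : Pt n) := by
  have h : HasFDerivAt (LV : VF n)
      ((0 : Pt n →L[ℝ] (Fin n → ℝ)).prod (ContinuousLinearMap.snd ℝ (Fin n → ℝ) (Fin n → ℝ))) p := by
    apply HasFDerivAt.prodMk
    · exact hasFDerivAt_const (0:Fin n → ℝ) p
    · exact (ContinuousLinearMap.snd ℝ (Fin n → ℝ) (Fin n → ℝ)).hasFDerivAt
  rw [h.fderiv]; rfl

lemma fderiv_sum2 {f : Fin n → Fin n → Pt n → ℝ} {p : Pt n}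
    (hf : ∀ i j, DifferentiableAt ℝ (f i j) p) (w : Pt n) :
    fderiv ℝ (fun q => ∑ i, ∑ j, f i j q) p w = ∑ i, ∑ j, fderiv ℝ (f i j) p w := by
  rw [fderiv_fun_sum (fun i _ => DifferentiableAt.fun_sum (fun j _ => hf i j)),
    ContinuousLinearMap.sum_apply]
  refine Finset.sum_congr rfl fun i _ => ?_
  rw [fderiv_fun_sum (fun j _ => hf i j), ContinuousLinearMap.sum_apply]

lemma fderiv_mul3 {f g h : Pt n → ℝ} {p : Pt n} (hf : DifferentiableAt ℝ f p)
    (hg : DifferentiableAt ℝ g p) (hh : DifferentiableAt ℝ h p) (w : Pt n) :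
    fderiv ℝ (fun q => f q * (g q * h q)) p w
      = fderiv ℝ f p w * (g p * h p) + f p * (fderiv ℝ g p w * h p)
        + f p * (g p * fderiv ℝ h p w) := by
  rw [fderiv_apply_mul hf (hg.fun_mul hh) w, fderiv_apply_mul hg hh w]; ring

lemma gb_symm (E : Fin (n-1) → Fin n → Pt n → ℝ) {p : Pt n} (hp : p ∈ fc.U)
    (a b : Fin (n-1)) : gb fc E p a b = gb fc E p b a := by
  unfold gb
  rw [Finset.sum_comm]
  refine Finset.sum_congr rfl fun i _ => Finset.sum_congr rfl fun j _ => ?_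
  rw [fc.gsymm j i p hp]; ring

lemma ortho_deriv {E : Fin (n-1) → Fin n → Pt n → ℝ} (hE : IsAdaptedFrame fc E)
    (a b : Fin (n-1)) {p : Pt n} (hp : p ∈ fc.U) :
    ∑ i, ∑ j, fc.g i j p *
        (fderiv ℝ (E b i) p (((0:Fin n → ℝ), fun k => E a k p) : Pt n) * p.2 j)
      = - gb fc E p a b := by
  set w : Pt n := (((0:Fin n → ℝ), fun k => E a k p) : Pt n) with hw
  have hdE : ∀ c i, DifferentiableAt ℝ (E c i) p :=
    fun c i => diffAt_of_on fc.hUopen (hE.1 c i) hp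
  have hdg : ∀ i j, DifferentiableAt ℝ (fc.g i j) p :=
    fun i j => diffAt_of_on fc.hUopen (fc.gsmooth i j) hp
  have hO : ∀ q ∈ fc.U, (∑ i, ∑ j, fc.g i j q * (E b i q * q.2 j)) = 0 := by
    intro q hq
    have h := hE.2.2 b q hq
    rw [show Gs fc q (vb E b q) (LV q)
        = ∑ i, ∑ j, fc.g i j q * (E b i q * q.2 j) from Gs_vv fc q _ _] at h
    exact h
  have hz : fderiv ℝ (fun q => ∑ i, ∑ j, fc.g i j q * (E b i q * q.2 j)) p = 0 :=
    fderiv_zero_of_eq_zero fc.hUopen hO hp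
  have happ : fderiv ℝ (fun q => ∑ i, ∑ j, fc.g i j q * (E b i q * q.2 j)) p w = 0 := by
    rw [hz]; rfl
  rw [fderiv_sum2 (fun i j => (hdg i j).fun_mul ((hdE b i).fun_mul (diffAt_snd_apply j p))) w] at happ
  have hexp : ∀ i j, fderiv ℝ (fun q => fc.g i j q * (E b i q * q.2 j)) p w
      = fderiv ℝ (fc.g i j) p w * (E b i p * p.2 j)
        + fc.g i j p * (fderiv ℝ (E b i) p w * p.2 j)
        + fc.g i j p * (E b i p * (fun k => E a k p) j) := by
    intro i j
    rw [fderiv_mul3 (hdg i j) (hdE b i) (diffAt_snd_apply j p) w, fderiv_snd_apply]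
  simp only [hexp] at happ
  rw [Finset.sum_congr rfl (fun i (_ : i ∈ Finset.univ) =>
    Finset.sum_add_distrib), Finset.sum_add_distrib] at happ
  rw [Finset.sum_congr rfl (fun i (_ : i ∈ Finset.univ) =>
    Finset.sum_add_distrib), Finset.sum_add_distrib] at happ
  have h1 : ∑ i, ∑ j, fderiv ℝ (fc.g i j) p w * (E b i p * p.2 j) = 0 := by
    refine Finset.sum_eq_zero fun i _ => ?_
    have hc := g_contract fc i (fun k => E a k p) hp
    calc ∑ j, fderiv ℝ (fc.g i j) p w * (E b i p * p.2 j)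
        = E b i p * ∑ j, fderiv ℝ (fc.g i j) p w * p.2 j := by
          rw [Finset.mul_sum]; exact Finset.sum_congr rfl fun j _ => by ring
      _ = 0 := by rw [hc]; ring
  have h3 : ∑ i, ∑ j, fc.g i j p * (E b i p * (fun k => E a k p) j) = gb fc E p a b := by
    rw [gb_symm fc E hp a b]
    unfold gb
    exact Finset.sum_congr rfl fun i _ => Finset.sum_congr rfl fun j _ => by ring
  rw [h1, h3] at happ
  linarith


lemma Gs_LL {p : Pt n} (hp : p ∈ fc.U) : Gs fc p (LV p) (LV p) = fc.F p ^ 2 := by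
  rw [show Gs fc p (LV p) (LV p) = ∑ i, ∑ j, fc.g i j p * (p.2 i * p.2 j) from
    Gs_vv fc p p.2 p.2]
  exact GLL fc hp

lemma koszul_key {E : Fin (n-1) → Fin n → Pt n → ℝ} (hE : IsAdaptedFrame fc E)
    {nab : VF n → VF n → VF n} (hnab : IsLeviCivita fc nab) (a b : Fin (n-1))
    {p : Pt n} (hp : p ∈ fc.U) :
    Gs fc p (nab (vb E a) (vb E b) p) (LV p) = - gb fc E p a b := by
  have hdE : ∀ c i, DifferentiableAt ℝ (E c i) p :=
    fun c i => diffAt_of_on fc.hUopen (hE.1 c i) hp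
  have hdg : ∀ i j, DifferentiableAt ℝ (fc.g i j) p :=
    fun i j => diffAt_of_on fc.hUopen (fc.gsmooth i j) hp
  have heq := hnab (vb E a) (vb E b) LV (vb_smooth fc hE.1 a) (vb_smooth fc hE.1 b)
    (LV_smooth fc) p hp
  set L : Pt n := (((0:Fin n → ℝ), p.2) : Pt n) with hL
  have hLVp : LV p = L := rfl
  -- term 1
  have hT1 : Dv (vb E a) (fun q => Gs fc q (vb E b q) (LV q)) p = 0 := by
    unfold Dv
    rw [fderiv_zero_of_eq_zero fc.hUopen (fun q hq => hE.2.2 b q hq) hp]; rfl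
  have hT2 : Dv (vb E b) (fun q => Gs fc q (vb E a q) (LV q)) p = 0 := by
    unfold Dv
    rw [fderiv_zero_of_eq_zero fc.hUopen (fun q hq => hE.2.2 a q hq) hp]; rfl
  -- abbreviations
  set P : ℝ := ∑ i, ∑ j, fc.g i j p * (fderiv ℝ (E a i) p L * E b j p) with hP
  set Q : ℝ := ∑ i, ∑ j, fc.g i j p * (fderiv ℝ (E b i) p L * E a j p) with hQ
  have hQ' : ∑ i, ∑ j, fc.g i j p * (E a i p * fderiv ℝ (E b j) p L) = Q := by
    rw [hQ, Finset.sum_comm]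
    refine Finset.sum_congr rfl fun i _ => Finset.sum_congr rfl fun j _ => ?_
    rw [fc.gsymm j i p hp]; ring
  -- term 3
  have hT3 : Dv LV (fun q => Gs fc q (vb E a q) (vb E b q)) p = P + Q := by
    unfold Dv
    have hfun : (fun q => Gs fc q (vb E a q) (vb E b q))
        = fun q => ∑ i, ∑ j, fc.g i j q * (E a i q * E b j q) :=
      funext fun q => Gs_vv fc q _ _
    rw [hfun, hLVp,
      fderiv_sum2 (fun i j => (hdg i j).fun_mul ((hdE a i).fun_mul (hdE b j))) L]
    have hexp : ∀ i j, fderiv ℝ (fun q => fc.g i j q * (E a i q * E b j q)) p L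
        = fc.g i j p * (fderiv ℝ (E a i) p L * E b j p)
          + fc.g i j p * (E a i p * fderiv ℝ (E b j) p L) := by
      intro i j
      rw [fderiv_mul3 (hdg i j) (hdE a i) (hdE b j) L, fderiv_g_L fc i j hp]
      ring
    simp only [hexp]
    rw [Finset.sum_congr rfl (fun i (_ : i ∈ Finset.univ) => Finset.sum_add_distrib),
      Finset.sum_add_distrib, hQ']
  -- term 4
  have hlieXZ : lie (vb E a) LV p
      = (((0:Fin n → ℝ), fun i => E a i p - fderiv ℝ (E a i) p L) : Pt n) := by
    unfold lie
    rw [fderiv_LV_apply, show fderiv ℝ (vb E a) p (LV p)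
        = (((0:Fin n → ℝ), fun i => fderiv ℝ (E a i) p (LV p)) : Pt n) from
      fderiv_vf_apply (hdE a) (LV p)]
    rw [hLVp]
    ext i <;> simp [vb]
  have hT4 : Gs fc p (lie (vb E a) LV p) (vb E b p) = gb fc E p a b - P := by
    rw [hlieXZ, show vb E b p = (((0:Fin n → ℝ), fun i => E b i p) : Pt n) from rfl,
      Gs_vv]
    rw [hP, show gb fc E p a b = ∑ i, ∑ j, fc.g i j p * (E a i p * E b j p) from by
      unfold gb
      exact Finset.sum_congr rfl fun i _ => Finset.sum_congr rfl fun j _ => by ring]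
    rw [← Finset.sum_sub_distrib]
    refine Finset.sum_congr rfl fun i _ => ?_
    rw [← Finset.sum_sub_distrib]
    refine Finset.sum_congr rfl fun j _ => by ring
  -- term 5
  have hlieYZ : lie (vb E b) LV p
      = (((0:Fin n → ℝ), fun i => E b i p - fderiv ℝ (E b i) p L) : Pt n) := by
    unfold lie
    rw [fderiv_LV_apply, show fderiv ℝ (vb E b) p (LV p)
        = (((0:Fin n → ℝ), fun i => fderiv ℝ (E b i) p (LV p)) : Pt n) from
      fderiv_vf_apply (hdE b) (LV p)]
    rw [hLVp]
    ext i <;> simp [vb]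
  have hT5 : Gs fc p (lie (vb E b) LV p) (vb E a p) = gb fc E p a b - Q := by
    rw [hlieYZ, show vb E a p = (((0:Fin n → ℝ), fun i => E a i p) : Pt n) from rfl,
      Gs_vv]
    rw [hQ, show gb fc E p a b = ∑ i, ∑ j, fc.g i j p * (E b i p * E a j p) from by
      rw [gb_symm fc E hp a b]
      unfold gb
      exact Finset.sum_congr rfl fun i _ => Finset.sum_congr rfl fun j _ => by ring]
    rw [← Finset.sum_sub_distrib]
    refine Finset.sum_congr rfl fun i _ => ?_
    rw [← Finset.sum_sub_distrib]
    refine Finset.sum_congr rfl fun j _ => by ring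
  -- term 6
  have hlieXY : lie (vb E a) (vb E b) p
      = (((0:Fin n → ℝ), fun i => fderiv ℝ (E b i) p (vb E a p)
          - fderiv ℝ (E a i) p (vb E b p)) : Pt n) := by
    unfold lie
    rw [show fderiv ℝ (vb E b) p (vb E a p)
        = (((0:Fin n → ℝ), fun i => fderiv ℝ (E b i) p (vb E a p)) : Pt n) from
      fderiv_vf_apply (hdE b) (vb E a p),
      show fderiv ℝ (vb E a) p (vb E b p)
        = (((0:Fin n → ℝ), fun i => fderiv ℝ (E a i) p (vb E b p)) : Pt n) from
      fderiv_vf_apply (hdE a) (vb E b p)]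
    ext i <;> simp
  have hT6 : Gs fc p (lie (vb E a) (vb E b) p) (LV p)
      = (- gb fc E p a b) - (- gb fc E p b a) := by
    rw [hlieXY, hLVp, show L = (((0:Fin n → ℝ), p.2) : Pt n) from rfl, Gs_vv]
    have hsplit : ∑ i, ∑ j, fc.g i j p *
        ((fderiv ℝ (E b i) p (vb E a p) - fderiv ℝ (E a i) p (vb E b p)) * p.2 j)
        = (∑ i, ∑ j, fc.g i j p * (fderiv ℝ (E b i) p (vb E a p) * p.2 j))
          - ∑ i, ∑ j, fc.g i j p * (fderiv ℝ (E a i) p (vb E b p) * p.2 j) := by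
      rw [← Finset.sum_sub_distrib]
      refine Finset.sum_congr rfl fun i _ => ?_
      rw [← Finset.sum_sub_distrib]
      exact Finset.sum_congr rfl fun j _ => by ring
    rw [hsplit,
      show (∑ i, ∑ j, fc.g i j p * (fderiv ℝ (E b i) p (vb E a p) * p.2 j))
        = - gb fc E p a b from ortho_deriv fc hE a b hp,
      show (∑ i, ∑ j, fc.g i j p * (fderiv ℝ (E a i) p (vb E b p) * p.2 j))
        = - gb fc E p b a from ortho_deriv fc hE b a hp]
  rw [hT1, hT2, hT3, hT4, hT5, hT6] at heq
  have hba := gb_symm fc E hp a b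
  linarith


lemma sum_swap4 {α β γ δ : Type*} [Fintype α] [Fintype β] [Fintype γ] [Fintype δ]
    (f : α → β → γ → δ → ℝ) :
    ∑ i, ∑ j, ∑ a, ∑ b, f i j a b = ∑ a, ∑ b, ∑ i, ∑ j, f i j a b := by
  calc ∑ i, ∑ j, ∑ a, ∑ b, f i j a b
      = ∑ i, ∑ a, ∑ j, ∑ b, f i j a b := by
        exact Finset.sum_congr rfl fun i _ => Finset.sum_comm
    _ = ∑ a, ∑ i, ∑ j, ∑ b, f i j a b := Finset.sum_comm
    _ = ∑ a, ∑ i, ∑ b, ∑ j, f i j a b := by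
        exact Finset.sum_congr rfl fun a _ =>
          Finset.sum_congr rfl fun i _ => Finset.sum_comm
    _ = ∑ a, ∑ b, ∑ i, ∑ j, f i j a b := by
        exact Finset.sum_congr rfl fun a _ => Finset.sum_comm

lemma gb_pos {E : Fin (n-1) → Fin n → Pt n → ℝ} (hE : IsAdaptedFrame fc E)
    {p : Pt n} (hp : p ∈ fc.U) (v : Fin (n-1) → ℝ) (hv : v ≠ 0) :
    0 < ∑ a, ∑ b, gb fc E p a b * v a * v b := by
  set w : Fin n → ℝ := fun i => ∑ c, v c * E c i p with hwdef
  have hw : w ≠ 0 := by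
    intro h0
    apply hv
    have hli := (Fintype.linearIndependent_iff).1 (hE.2.1 p hp)
    have hz : ∑ c, v c • (fun i => E c i p) = 0 := by
      funext i
      rw [Finset.sum_apply]
      simpa [hwdef] using congrFun h0 i
    funext c
    exact hli v hz c
  have hsum : ∑ a, ∑ b, gb fc E p a b * v a * v b = ∑ i, ∑ j, fc.g i j p * w i * w j := by
    have hkey : ∀ i j, fc.g i j p * w i * w j
        = ∑ a, ∑ b, fc.g i j p * E a i p * E b j p * v a * v b := by
      intro i j
      rw [show w i = ∑ c, v c * E c i p from rfl, show w j = ∑ c, v c * E c j p from rfl]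
      simp only [Finset.mul_sum, Finset.sum_mul]
      rw [Finset.sum_comm]
      refine Finset.sum_congr rfl fun a _ => ?_
      refine Finset.sum_congr rfl fun b _ => ?_
      ring
    calc ∑ a, ∑ b, gb fc E p a b * v a * v b
        = ∑ a, ∑ b, ∑ i, ∑ j, fc.g i j p * E a i p * E b j p * v a * v b := by
          refine Finset.sum_congr rfl fun a _ => Finset.sum_congr rfl fun b _ => ?_
          unfold gb
          rw [Finset.sum_mul, Finset.sum_mul]
          refine Finset.sum_congr rfl fun i _ => ?_
          rw [Finset.sum_mul, Finset.sum_mul]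
      _ = ∑ i, ∑ j, ∑ a, ∑ b, fc.g i j p * E a i p * E b j p * v a * v b :=
          (sum_swap4 _).symm
      _ = ∑ i, ∑ j, fc.g i j p * w i * w j := by
          exact Finset.sum_congr rfl fun i _ => Finset.sum_congr rfl fun j _ =>
            (hkey i j).symm
  rw [hsum]
  exact fc.gposdef p hp w hw

/-- For any Finsler manifold `(M,F)`, neither the foliation
`V'TM` nor the foliation `V^⊥TM` is totally geodesic for the Levi-Civita
connection `∇` of the Sasaki metric `G` on `TM`: for both foliations the
second fundamental form satisfies
`H(∂̄/∂̄y^a, ∂̄/∂̄y^b) = −(1/F²) g_{ab} L`, which cannot vanish since the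
matrix `(g_{ab})` is positive definite. -/
theorem Vprime_Vperp_not_totally_geodesic {n : ℕ} (hn : 2 ≤ n) (fc : Chart n)
    (hU : fc.U.Nonempty)
    (E : Fin (n-1) → Fin n → Pt n → ℝ) (hE : IsAdaptedFrame fc E)
    (nab : VF n → VF n → VF n) (hnab : IsLeviCivita fc nab) :
    (∀ a b : Fin (n-1), ∀ p ∈ fc.U,
      projL fc (nab (vb E a) (vb E b)) p
        = (-(1 / fc.F p ^ 2) * gb fc E p a b) • LV p) ∧
    (∀ p ∈ fc.U, ∀ v : Fin (n-1) → ℝ, v ≠ 0 →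
      0 < ∑ a, ∑ b, gb fc E p a b * v a * v b) ∧
    ¬ (∀ X Y : VF n, ContDiffOn ℝ (⊤ : ℕ∞) X fc.U →
        ContDiffOn ℝ (⊤ : ℕ∞) Y fc.U →
        (∀ p ∈ fc.U, InV' fc p (X p)) → (∀ p ∈ fc.U, InV' fc p (Y p)) →
        ∀ p ∈ fc.U, InV' fc p (nab X Y p)) ∧
    ¬ (∀ X Y : VF n, ContDiffOn ℝ (⊤ : ℕ∞) X fc.U →
        ContDiffOn ℝ (⊤ : ℕ∞) Y fc.U →
        (∀ p ∈ fc.U, InVperp fc p (X p)) → (∀ p ∈ fc.U, InVperp fc p (Y p)) →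
        ∀ p ∈ fc.U, InVperp fc p (nab X Y p)) := by
  obtain ⟨p₀, hp₀⟩ := hU
  have hpos : ∀ p ∈ fc.U, ∀ v : Fin (n-1) → ℝ, v ≠ 0 →
      0 < ∑ a, ∑ b, gb fc E p a b * v a * v b :=
    fun p hp v hv => gb_pos fc hE hp v hv
  have ha0 : 0 < n - 1 := by omega
  set a0 : Fin (n-1) := ⟨0, ha0⟩ with ha0def
  have hgaa : 0 < gb fc E p₀ a0 a0 := by
    set v₀ : Fin (n-1) → ℝ := Pi.single a0 1 with hv₀
    have h := hpos p₀ hp₀ v₀ (by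
      intro h
      have := congrFun h a0
      simp [hv₀] at this)
    have hsum : ∑ a, ∑ b, gb fc E p₀ a b * v₀ a * v₀ b = gb fc E p₀ a0 a0 := by
      simp [hv₀, Pi.single_apply, mul_ite, ite_mul, Finset.sum_ite_eq', Finset.sum_ite_eq]
    rw [hsum] at h
    exact h
  refine ⟨?_, hpos, ?_, ?_⟩
  · intro a b p hp
    simp only [projL]
    rw [koszul_key fc hE hnab a b hp, Gs_LL fc hp]
    congr 1
    ring
  · intro hcon
    have hX : ∀ p ∈ fc.U, InV' fc p (vb E a0 p) := fun p hp => ⟨rfl, hE.2.2 a0 p hp⟩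
    have h := hcon (vb E a0) (vb E a0) (vb_smooth fc hE.1 a0) (vb_smooth fc hE.1 a0)
      hX hX p₀ hp₀
    have hzero := h.2
    rw [koszul_key fc hE hnab a0 a0 hp₀] at hzero
    linarith
  · intro hcon
    have hX : ∀ p ∈ fc.U, InVperp fc p (vb E a0 p) := fun p hp => hE.2.2 a0 p hp
    have h := hcon (vb E a0) (vb E a0) (vb_smooth fc hE.1 a0) (vb_smooth fc hE.1 a0)
      hX hX p₀ hp₀
    have hzero : Gs fc p₀ (nab (vb E a0) (vb E a0) p₀) (LV p₀) = 0 := h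
    rw [koszul_key fc hE hnab a0 a0 hp₀] at hzero
    linarith

end FinslerFoliations

end
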